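/- arXiv:1703.07658 — 5 statements merged into one kernel-verified Lean document; each statement's English description precedes it below -/
import Mathlib

section
/- For all real x with 0 < x ≤ π, the inequality |(sin x / x) · (3 / (2 + cos x))| ≤ 1 holds; i.e., every discrete wave of the P1–P1 scheme travels no faster than the analytic wave speed. -/
open Real

lemma aux_nonneg (f f' : ℝ → ℝ) (hd : ∀ x, HasDerivAt f (f' x) x) (h0 : f 0 = 0)
    (hpos : ∀ x ∈ Set.Icc (0:ℝ) Real.pi, 0 ≤ f' x) :
    ∀ x ∈ Set.Icc (0:ℝ) Real.pi, 0 ≤ f x := by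
  have hmono : MonotoneOn f (Set.Icc 0 Real.pi) := by
    apply monotoneOn_of_deriv_nonneg (convex_Icc _ _)
    · exact (continuous_iff_continuousAt.2 (fun x => (hd x).continuousAt)).continuousOn
    · intro y hy
      exact ((hd y).differentiableAt).differentiableWithinAt
    · intro y hy
      rw [interior_Icc] at hy
      rw [(hd y).deriv]
      exact hpos y ⟨le_of_lt hy.1, le_of_lt hy.2⟩
  intro y hy
  have := hmono (Set.left_mem_Icc.2 Real.pi_pos.le) hy hy.1
  linarith [this]

lemma key (x : ℝ) (hx : x ∈ Set.Icc (0:ℝ) Real.pi) :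
    3 * Real.sin x ≤ x * (2 + Real.cos x) := by
  -- h(x) = sin x - x cos x ≥ 0
  have h1 : ∀ y ∈ Set.Icc (0:ℝ) Real.pi, 0 ≤ Real.sin y - y * Real.cos y := by
    apply aux_nonneg _ (fun y => y * Real.sin y)
    · intro y
      have := ((Real.hasDerivAt_sin y).sub ((hasDerivAt_id y).mul (Real.hasDerivAt_cos y)))
      exact this.congr_deriv (by simp only [id]; ring)
    · simp
    · intro y hy
      exact mul_nonneg hy.1 (Real.sin_nonneg_of_nonneg_of_le_pi hy.1 hy.2)
  -- g1(x) = 2 - 2 cos x - x sin x ≥ 0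
  have h2 : ∀ y ∈ Set.Icc (0:ℝ) Real.pi, 0 ≤ 2 - 2 * Real.cos y - y * Real.sin y := by
    apply aux_nonneg _ (fun y => Real.sin y - y * Real.cos y)
    · intro y
      have := ((hasDerivAt_const y (2:ℝ)).sub ((Real.hasDerivAt_cos y).const_mul 2)).sub
        ((hasDerivAt_id y).mul (Real.hasDerivAt_sin y))
      exact this.congr_deriv (by simp only [id]; ring)
    · simp
    · exact h1
  -- g(x) = 2x + x cos x - 3 sin x ≥ 0
  have h3 : ∀ y ∈ Set.Icc (0:ℝ) Real.pi, 0 ≤ 2 * y + y * Real.cos y - 3 * Real.sin y := by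
    apply aux_nonneg _ (fun y => 2 - 2 * Real.cos y - y * Real.sin y)
    · intro y
      have := (((hasDerivAt_id y).const_mul 2).add
        ((hasDerivAt_id y).mul (Real.hasDerivAt_cos y))).sub ((Real.hasDerivAt_sin y).const_mul 3)
      exact this.congr_deriv (by simp only [id]; ring)
    · simp
    · exact h2
  have := h3 x hx
  linarith

theorem stmt_4 (x : ℝ) (hx0 : 0 < x) (hxpi : x ≤ Real.pi) :
    |(Real.sin x / x) * (3 / (2 + Real.cos x))| ≤ 1 := by
  have hs : 0 ≤ Real.sin x := Real.sin_nonneg_of_nonneg_of_le_pi hx0.le hxpi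
  have hc : (0:ℝ) < 2 + Real.cos x := by nlinarith [Real.neg_one_le_cos x]
  have hk := key x ⟨hx0.le, hxpi⟩
  rw [abs_of_nonneg (by positivity)]
  rw [div_mul_div_comm, div_le_one (by positivity)]
  nlinarith
end

section
/- For g, H, Δx > 0 and ω, x real with x ∈ (0, π), the 4×4 matrix M with rows [iω, i(2g/Δx)sin(x/2), 0, 0], [0, 0, i(2H/Δx)sin(x/2), iω], [−cos(x/2), 0, (2 + cos x)/3, 0], [0, (2 + cos x)/3, 0, −cos(x/2)] has det M = 0 if and only if ω² = gH·(4/Δx²)·sin²(x/2)·(3cos(x/2)/(2 + cos x))². -/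
open Complex

theorem stmt_9 (g H Δx : ℝ) (hg : 0 < g) (hH : 0 < H) (hΔx : 0 < Δx)
    (ω x : ℝ) (hx : x ∈ Set.Ioo (0 : ℝ) Real.pi) :
    Matrix.det
      !![Complex.I * (ω : ℂ), Complex.I * ((2 * g / Δx : ℝ) : ℂ) * ((Real.sin (x / 2) : ℝ) : ℂ), 0, 0;
         0, 0, Complex.I * ((2 * H / Δx : ℝ) : ℂ) * ((Real.sin (x / 2) : ℝ) : ℂ), Complex.I * (ω : ℂ);
         -((Real.cos (x / 2) : ℝ) : ℂ), 0, (((2 + Real.cos x) / 3 : ℝ) : ℂ), 0;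
         0, (((2 + Real.cos x) / 3 : ℝ) : ℂ), 0, -((Real.cos (x / 2) : ℝ) : ℂ)] = 0
      ↔ ω ^ 2 = g * H * (4 / Δx ^ 2) * Real.sin (x / 2) ^ 2
          * (3 * Real.cos (x / 2) / (2 + Real.cos x)) ^ 2 := by
  have hp : (2 + Real.cos x) ≠ 0 := by nlinarith [Real.neg_one_le_cos x]
  have hdet : Matrix.det
      !![Complex.I * (ω : ℂ), Complex.I * ((2 * g / Δx : ℝ) : ℂ) * ((Real.sin (x / 2) : ℝ) : ℂ), 0, 0;
         0, 0, Complex.I * ((2 * H / Δx : ℝ) : ℂ) * ((Real.sin (x / 2) : ℝ) : ℂ), Complex.I * (ω : ℂ);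
         -((Real.cos (x / 2) : ℝ) : ℂ), 0, (((2 + Real.cos x) / 3 : ℝ) : ℂ), 0;
         0, (((2 + Real.cos x) / 3 : ℝ) : ℂ), 0, -((Real.cos (x / 2) : ℝ) : ℂ)]
      = ((ω ^ 2 * ((2 + Real.cos x) / 3) ^ 2
          - 4 * g * H / Δx ^ 2 * Real.sin (x / 2) ^ 2 * Real.cos (x / 2) ^ 2 : ℝ) : ℂ) := by
    simp [Matrix.det_succ_row_zero, Fin.sum_univ_succ, show (Fin.succAbove 1 2 : Fin 4) = 3 from rfl]
    push_cast
    linear_combination (4 * (g : ℂ) * (H : ℂ) / (Δx : ℂ) ^ 2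
      * Complex.sin ((x : ℂ) / 2) ^ 2 * Complex.cos ((x : ℂ) / 2) ^ 2
      - (ω : ℂ) ^ 2 * ((2 + Complex.cos (x : ℂ)) / 3) ^ 2) * Complex.I_sq
  rw [hdet, Complex.ofReal_eq_zero, sub_eq_zero]
  have hp3 : ((2 + Real.cos x) / 3 : ℝ) ^ 2 ≠ 0 := pow_ne_zero _ (div_ne_zero hp (by norm_num))
  have hrhs : g * H * (4 / Δx ^ 2) * Real.sin (x / 2) ^ 2
      * (3 * Real.cos (x / 2) / (2 + Real.cos x)) ^ 2
      = (4 * g * H / Δx ^ 2 * Real.sin (x / 2) ^ 2 * Real.cos (x / 2) ^ 2)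
        / ((2 + Real.cos x) / 3) ^ 2 := by
    field_simp
  rw [hrhs, eq_div_iff hp3, mul_comm (ω ^ 2)]
end

section
/- For g, H, Δx > 0 and ω real, x ∈ (0, π), the 4×4 matrix M with rows [iω, i(2g/Δx)sin(x/2), 0, 0], [0, 0, i(2H/Δx)sin(x/2), iω], [1, 0, −cos(x/2), 0], [0, −cos(x/2), 0, 1] has det M = 0 if and only if ω² = gH·(4/Δx²)·tan²(x/2). -/
open Complex

theorem stmt_10 (g H Δx : ℝ) (hg : 0 < g) (hH : 0 < H) (hΔx : 0 < Δx)
    (ω x : ℝ) (hx : x ∈ Set.Ioo (0 : ℝ) Real.pi) :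
    Matrix.det
      !![Complex.I * (ω : ℂ), Complex.I * ((2 * g / Δx : ℝ) : ℂ) * ((Real.sin (x / 2) : ℝ) : ℂ), 0, 0;
         0, 0, Complex.I * ((2 * H / Δx : ℝ) : ℂ) * ((Real.sin (x / 2) : ℝ) : ℂ), Complex.I * (ω : ℂ);
         1, 0, -((Real.cos (x / 2) : ℝ) : ℂ), 0;
         0, -((Real.cos (x / 2) : ℝ) : ℂ), 0, 1] = 0
      ↔ ω ^ 2 = g * H * (4 / Δx ^ 2) * Real.tan (x / 2) ^ 2 := by
  obtain ⟨hx0, hxpi⟩ := hx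
  have hc : 0 < Real.cos (x / 2) := by
    apply Real.cos_pos_of_mem_Ioo
    constructor <;> [linarith [Real.pi_pos]; linarith]
  have hdet : Matrix.det
      !![Complex.I * (ω : ℂ), Complex.I * ((2 * g / Δx : ℝ) : ℂ) * ((Real.sin (x / 2) : ℝ) : ℂ), 0, 0;
         0, 0, Complex.I * ((2 * H / Δx : ℝ) : ℂ) * ((Real.sin (x / 2) : ℝ) : ℂ), Complex.I * (ω : ℂ);
         1, 0, -((Real.cos (x / 2) : ℝ) : ℂ), 0;
         0, -((Real.cos (x / 2) : ℝ) : ℂ), 0, 1]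
      = ((ω ^ 2 * Real.cos (x / 2) ^ 2
          - (2 * g / Δx) * (2 * H / Δx) * Real.sin (x / 2) ^ 2 : ℝ) : ℂ) := by
    simp [Matrix.det_succ_row_zero, Fin.sum_univ_succ]
    push_cast
    simp only [show ((1:Fin 4).succAbove 2) = 3 from rfl, Matrix.cons_val_three,
      Matrix.cons_val_zero, Matrix.cons_val_one, Matrix.head_cons, Matrix.head_fin_const, Matrix.vecHead, Matrix.vecTail, Function.comp,
      show ((Fin.succ 0 : Fin 3).succ) = 2 from rfl, Matrix.cons_val_two]
    ring_nf
    norm_num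
    rw [show (![-cos ((x:ℂ) * (1 / 2)), 0, 1] : Fin 3 → ℂ) 2 = 1 from rfl]
    ring
  rw [hdet]
  rw [show ((0:ℂ)) = ((0:ℝ):ℂ) by norm_num, Complex.ofReal_inj]
  rw [Real.tan_eq_sin_div_cos]
  constructor
  · intro h
    field_simp
    have hc2 : Real.cos (x / 2) ^ 2 ≠ 0 := by positivity
    field_simp at h ⊢
    nlinarith [h]
  · intro h
    have hΔ2 : (Δx:ℝ) ≠ 0 := ne_of_gt hΔx
    have hcne : Real.cos (x / 2) ≠ 0 := ne_of_gt hc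
    field_simp at h ⊢
    nlinarith [h]
end

section
/- For every x ∈ (0, π), the GP0–GP0 normalized phase speed strictly dominates the P1–P0 one: tan(x/2)/(x/2) > (sin(x/2)/(x/2)) · sqrt(3/(2 + cos x)). -/
theorem stmt_18 (x : ℝ) (hx : x ∈ Set.Ioo (0 : ℝ) Real.pi) :
    (Real.sin (x / 2) / (x / 2)) * Real.sqrt (3 / (2 + Real.cos x))
      < Real.tan (x / 2) / (x / 2) := by
  obtain ⟨hx0, hxpi⟩ := hx
  have h2 : 0 < x / 2 := by linarith
  have h2' : x / 2 < Real.pi / 2 := by linarith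
  have hs : 0 < Real.sin (x / 2) := Real.sin_pos_of_pos_of_lt_pi h2 (by linarith [Real.pi_pos])
  have hc : 0 < Real.cos (x / 2) := Real.cos_pos_of_mem_Ioo ⟨by linarith [Real.pi_pos], h2'⟩
  have hc1 : Real.cos (x / 2) < 1 := by
    nlinarith [Real.sin_sq_add_cos_sq (x / 2)]
  set c := Real.cos (x / 2) with hcdef
  have hcosx : Real.cos x = 2 * c ^ 2 - 1 := by
    have : Real.cos (2 * (x / 2)) = 2 * Real.cos (x / 2) ^ 2 - 1 := Real.cos_two_mul _
    rw [show 2 * (x / 2) = x by ring] at this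
    exact this
  have hden : (0:ℝ) < 2 + Real.cos x := by nlinarith
  have key : Real.sqrt (3 / (2 + Real.cos x)) < 1 / c := by
    rw [show (1:ℝ)/c = Real.sqrt ((1/c)^2) from (Real.sqrt_sq (by positivity)).symm]
    apply Real.sqrt_lt_sqrt (by positivity)
    rw [one_div, inv_pow, ← one_div, div_lt_div_iff₀ hden (by positivity), hcosx]
    nlinarith
  have htan : Real.tan (x / 2) / (x / 2) = (Real.sin (x / 2) / (x / 2)) * (1 / c) := by
    rw [Real.tan_eq_sin_div_cos, ← hcdef]
    field_simp
  rw [htan]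
  apply mul_lt_mul_of_pos_left key (by positivity)
end

section
/- For all x ∈ (0, π), the P1–P1 normalized phase speed is strictly smaller than the P1–P0 one: (sin x / x)·(3/(2 + cos x)) < (sin(x/2)/(x/2))·sqrt(3/(2 + cos x)). -/
theorem stmt_19 (x : ℝ) (hx : x ∈ Set.Ioo (0 : ℝ) Real.pi) :
    (Real.sin x / x) * (3 / (2 + Real.cos x))
      < (Real.sin (x / 2) / (x / 2)) * Real.sqrt (3 / (2 + Real.cos x)) := by
  obtain ⟨hx0, hxpi⟩ := hx
  have hpi := Real.pi_pos
  have hs : 0 < Real.sin (x / 2) :=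
    Real.sin_pos_of_pos_of_lt_pi (by linarith) (by linarith)
  have hcpos : 0 < Real.cos (x / 2) :=
    Real.cos_pos_of_mem_Ioo ⟨by linarith, by linarith⟩
  have hclt : Real.cos (x / 2) < 1 := by
    have := Real.cos_lt_cos_of_nonneg_of_le_pi (x := 0) (y := x / 2)
      le_rfl (by linarith) (by linarith)
    simpa using this
  have hsin : Real.sin x = 2 * Real.sin (x / 2) * Real.cos (x / 2) := by
    have := Real.sin_two_mul (x / 2)
    rw [show 2 * (x / 2) = x by ring] at this
    linarith
  have hcos : Real.cos x = 2 * Real.cos (x / 2) ^ 2 - 1 := by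
    have := Real.cos_two_mul (x / 2)
    rw [show 2 * (x / 2) = x by ring] at this
    linarith
  set c := Real.cos (x / 2) with hc
  have hden : (0 : ℝ) < 2 + Real.cos x := by rw [hcos]; nlinarith
  set r := 3 / (2 + Real.cos x) with hr
  have hrpos : 0 < r := by positivity
  have hsq : Real.sqrt r * Real.sqrt r = r := Real.mul_self_sqrt hrpos.le
  have hsqrtpos : 0 < Real.sqrt r := Real.sqrt_pos.mpr hrpos
  have hr3 : r * (1 + 2 * c ^ 2) = 3 := by
    have h : r * (2 + Real.cos x) = 3 := by
      rw [hr]; exact div_mul_cancel₀ _ hden.ne'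
    rw [hcos] at h
    linear_combination h
  have hc2r : c ^ 2 * r < 1 := by nlinarith
  have h1 : c * Real.sqrt r < 1 := by nlinarith [mul_pos hcpos hsqrtpos]
  have key : c * r < Real.sqrt r := by nlinarith
  have h2s : Real.sin (x / 2) / (x / 2) = 2 * Real.sin (x / 2) / x := by
    field_simp
  rw [hsin, h2s]
  have hfac : 0 < 2 * Real.sin (x / 2) / x := by positivity
  have hlt := mul_lt_mul_of_pos_left key hfac
  have heq : 2 * Real.sin (x / 2) * c / x * r
      = 2 * Real.sin (x / 2) / x * (c * r) := by ring
  rw [heq]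
  exact hlt
end
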